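/- Let R be a Γ-graded ring and A a graded quasi-injective graded right R-module. Let f : A → A be an R-linear map of degree α whose kernel is graded essential in A. Then for every R-linear map r : A → A of degree −α there exists an R-linear map g : A → A of degree 0 with g ∘ (id_A − r∘f) = id_A; in particular id_A − r∘f is injective. -/

import Mathlib

/- Setting: `Γ = ι` an additive abelian group, `R` a ring, and `A` a (graded) right
`R`-module, encoded as a left `Rᵐᵒᵖ`-module, with homogeneous components the additive
subgroups `ℬ γ` forming a direct sum decomposition of `A`. -/

variable {ι : Type*} {R : Type*}

section ModDefs
variable [DecidableEq ι] [AddCommGroup ι]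
variable (R) [Ring R] {A : Type*} [AddCommGroup A] [Module Rᵐᵒᵖ A]
  (ℬ : ι → AddSubgroup A) [DirectSum.Decomposition ℬ]

/-- A graded submodule of the graded right `R`-module `A` (right module structure is
encoded as a `Rᵐᵒᵖ`-module structure): a submodule containing all homogeneous
components of its elements. -/
def IsGradedSubmodule (M : Set A) : Prop :=
  (0 : A) ∈ M ∧ (∀ x ∈ M, ∀ y ∈ M, x + y ∈ M) ∧ (∀ x ∈ M, -x ∈ M) ∧
  (∀ x ∈ M, ∀ r : R, (MulOpposite.op r) • x ∈ M) ∧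
  ∀ x ∈ M, ∀ γ : ι, ((DirectSum.decompose ℬ x γ : ℬ γ) : A) ∈ M

/-- A subset `M` is graded essential in `A`: it meets every nonzero graded
submodule of `A` nontrivially. -/
def GrEssentialSubmodule (M : Set A) : Prop :=
  ∀ N : Set A, IsGradedSubmodule R ℬ N → (∃ x ∈ N, x ≠ 0) →
    ∃ x, x ∈ M ∩ N ∧ x ≠ 0

/-- An `R`-linear map `A → A` of degree `α`. -/
def IsDegMap (α : ι) (f : A → A) : Prop :=
  (∀ x y : A, f (x + y) = f x + f y) ∧
  (∀ (x : A) (r : R), f ((MulOpposite.op r) • x) = (MulOpposite.op r) • f x) ∧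
  ∀ γ : ι, ∀ a ∈ ℬ γ, f a ∈ ℬ (γ + α)

/-- `A` is graded quasi-injective: every degree-zero `R`-linear map from a graded
submodule `M` of `A` to `A` extends to a degree-zero `R`-linear map `A → A`. -/
def GrQuasiInjective : Prop :=
  ∀ M : Set A, IsGradedSubmodule R ℬ M → ∀ f : A → A,
    (∀ x ∈ M, ∀ y ∈ M, f (x + y) = f x + f y) →
    (∀ x ∈ M, ∀ r : R, f ((MulOpposite.op r) • x) = (MulOpposite.op r) • f x) →
    (∀ γ : ι, ∀ x ∈ M, x ∈ ℬ γ → f x ∈ ℬ γ) →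
    ∃ g : A → A, IsDegMap R ℬ (0 : ι) g ∧ ∀ x ∈ M, g x = f x

end ModDefs


section Helpers
variable [DecidableEq ι] [AddCommGroup ι] [Ring R]
    {A : Type*} [AddCommGroup A] [Module Rᵐᵒᵖ A]
    (ℬ : ι → AddSubgroup A) [DirectSum.Decomposition ℬ]

theorem degMap_decompose
    {α : ι} {f : A → A} (hf : IsDegMap R ℬ α f) (a : A) (γ : ι) :
    ((DirectSum.decompose ℬ (f a) (γ + α) : ℬ (γ + α)) : A)
      = f ((DirectSum.decompose ℬ a γ : ℬ γ) : A) := by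
  classical
  obtain ⟨hadd, -, hdeg⟩ := hf
  set F : A →+ A := AddMonoidHom.mk' f hadd with hF
  have hFf : ∀ x, F x = f x := fun _ => rfl
  set s := (DirectSum.decompose ℬ a).support with hs
  have h1 : f a = ∑ γ' ∈ s, f ((DirectSum.decompose ℬ a γ' : ℬ γ') : A) := by
    conv_lhs => rw [← DirectSum.sum_support_decompose ℬ a]
    rw [← hFf, map_sum]; simp [hFf]; rfl
  have h2 : ∀ γ' ∈ s,
      ((DirectSum.decompose ℬ (f ((DirectSum.decompose ℬ a γ' : ℬ γ') : A)) (γ + α) : ℬ (γ+α)) : A)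
        = if γ' = γ then f ((DirectSum.decompose ℬ a γ' : ℬ γ') : A) else 0 := by
    intro γ' _
    have hm : f ((DirectSum.decompose ℬ a γ' : ℬ γ') : A) ∈ ℬ (γ' + α) :=
      hdeg γ' _ (SetLike.coe_mem _)
    by_cases h : γ' = γ
    · subst h
      rw [if_pos rfl, DirectSum.decompose_of_mem_same ℬ hm]
    · rw [if_neg h, DirectSum.decompose_of_mem_ne ℬ hm
        (fun hc => h (add_right_cancel hc))]
  have h3 : ((DirectSum.decompose ℬ (f a) (γ + α) : ℬ (γ + α)) : A)
      = ∑ γ' ∈ s,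
        ((DirectSum.decompose ℬ (f ((DirectSum.decompose ℬ a γ' : ℬ γ') : A)) (γ + α) : ℬ (γ+α)) : A) := by
    rw [h1, DirectSum.decompose_sum, DFinsupp.finset_sum_apply]
    push_cast
    rfl
  rw [h3, Finset.sum_congr rfl h2, Finset.sum_ite_eq' s γ]
  by_cases hγ : γ ∈ s
  · rw [if_pos hγ]
  · rw [if_neg hγ]
    have : DirectSum.decompose ℬ a γ = 0 := DFinsupp.notMem_support_iff.mp hγ
    rw [this]
    simp only [ZeroMemClass.coe_zero]
    rw [← hFf, map_zero]

theorem degMap_zero_decompose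
    {f : A → A} (hf : IsDegMap R ℬ (0 : ι) f) (a : A) (γ : ι) :
    ((DirectSum.decompose ℬ (f a) γ : ℬ γ) : A)
      = f ((DirectSum.decompose ℬ a γ : ℬ γ) : A) := by
  have h := degMap_decompose ℬ hf a γ
  rw [add_zero] at h
  exact h

end Helpers

/-- Let `A` be a graded quasi-injective graded right `R`-module and
`f : A → A` an `R`-linear map of degree `α` whose kernel is graded essential in `A`.
Then for every `R`-linear map `r : A → A` of degree `-α` there is an `R`-linear map
`g : A → A` of degree `0` with `g ∘ (id - r ∘ f) = id`; in particular `id - r ∘ f`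
is injective. -/
theorem quasiInjective_one_sub_comp_leftInverse
    [DecidableEq ι] [AddCommGroup ι] [Ring R]
    {A : Type*} [AddCommGroup A] [Module Rᵐᵒᵖ A]
    (ℬ : ι → AddSubgroup A) [DirectSum.Decomposition ℬ]
    (hqi : GrQuasiInjective R ℬ) (α : ι) (f : A → A) (hf : IsDegMap R ℬ α f)
    (hker : GrEssentialSubmodule R ℬ {a : A | f a = 0})
    (r : A → A) (hr : IsDegMap R ℬ (-α) r) :
    (∃ g : A → A, IsDegMap R ℬ (0 : ι) g ∧ ∀ a : A, g (a - r (f a)) = a) ∧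
      Function.Injective (fun a : A => a - r (f a)) := by
    classical
  obtain ⟨fadd, fsmul, fdeg⟩ := hf
  obtain ⟨radd, rsmul, rdeg⟩ := hr
  set Ff : A →+ A := AddMonoidHom.mk' f fadd with hFf
  set Fr : A →+ A := AddMonoidHom.mk' r radd with hFr
  have f0 : f 0 = 0 := Ff.map_zero
  have r0 : r 0 = 0 := Fr.map_zero
  set φ : A → A := fun a => a - r (f a) with hφ
  have φadd : ∀ x y : A, φ (x + y) = φ x + φ y := by
    intro x y
    simp only [hφ, fadd, radd]
    abel
  have φsmul : ∀ (x : A) (c : R), φ ((MulOpposite.op c) • x) = (MulOpposite.op c) • φ x := by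
    intro x c
    simp only [hφ, fsmul, rsmul, smul_sub]
  set Φ : A →+ A := AddMonoidHom.mk' φ φadd with hΦ
  have hΦφ : ∀ x, Φ x = φ x := fun _ => rfl
  have φdeg : IsDegMap R ℬ (0 : ι) φ := by
    refine ⟨φadd, φsmul, ?_⟩
    intro γ a ha
    have h1 : f a ∈ ℬ (γ + α) := fdeg γ a ha
    have h2 : r (f a) ∈ ℬ (γ + α + -α) := rdeg _ _ h1
    have hγ : γ + α + -α = γ := by abel
    rw [hγ] at h2
    have hγ0 : γ + 0 = γ := add_zero γ
    rw [hγ0]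
    exact sub_mem ha h2
  -- φ kills only 0
  have φinj0 : ∀ x : A, φ x = 0 → x = 0 := by
    intro x hx
    by_contra hxne
    set N : Set A := {y : A | φ y = 0} with hN
    have hNgr : IsGradedSubmodule R ℬ N := by
      refine ⟨?_, ?_, ?_, ?_, ?_⟩
      · show φ 0 = 0
        simp only [hφ, f0, r0, sub_zero]
      · intro a ha b hb
        show φ (a + b) = 0
        rw [φadd, ha, hb, add_zero]
      · intro a ha
        show φ (-a) = 0
        rw [← hΦφ, map_neg, hΦφ, ha, neg_zero]
      · intro a ha c
        show φ ((MulOpposite.op c) • a) = 0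
        rw [φsmul, ha, smul_zero]
      · intro a ha γ
        show φ ((DirectSum.decompose ℬ a γ : ℬ γ) : A) = 0
        have h := degMap_zero_decompose ℬ φdeg a γ
        rw [← h, ha]
        simp
    obtain ⟨y, ⟨hy1, hy2⟩, hyne⟩ := hker N hNgr ⟨x, hx, hxne⟩
    have : φ y = y := by
      simp only [hφ]
      rw [hy1, r0, sub_zero]
    exact hyne (this ▸ hy2)
  have φinj : Function.Injective φ := by
    intro a b h
    have : φ (a - b) = 0 := by
      rw [← hΦφ, map_sub, hΦφ, hΦφ, h, sub_self]
    have := φinj0 _ this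
    exact sub_eq_zero.mp this
  -- the range of φ is a graded submodule
  set M : Set A := Set.range φ with hM
  have hMgr : IsGradedSubmodule R ℬ M := by
    refine ⟨⟨0, by simp only [hφ, f0, r0, sub_zero]⟩, ?_, ?_, ?_, ?_⟩
    · rintro _ ⟨a, rfl⟩ _ ⟨b, rfl⟩
      exact ⟨a + b, φadd a b⟩
    · rintro _ ⟨a, rfl⟩
      exact ⟨-a, by rw [← hΦφ, map_neg, hΦφ]⟩
    · rintro _ ⟨a, rfl⟩ c
      exact ⟨(MulOpposite.op c) • a, φsmul a c⟩
    · rintro _ ⟨a, rfl⟩ γ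
      exact ⟨(DirectSum.decompose ℬ a γ : ℬ γ), (degMap_zero_decompose ℬ φdeg a γ).symm⟩
  -- the partial inverse of φ on its range
  set ψ : A → A := fun x => if h : ∃ a, φ a = x then h.choose else 0 with hψdef
  have hψ : ∀ a : A, ψ (φ a) = a := by
    intro a
    have h : ∃ b, φ b = φ a := ⟨a, rfl⟩
    simp only [hψdef, dif_pos h]
    exact φinj h.choose_spec
  have hext : ∃ g : A → A, IsDegMap R ℬ (0 : ι) g ∧ ∀ x ∈ M, g x = ψ x := by
    refine hqi M hMgr ψ ?_ ?_ ?_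
    · rintro _ ⟨a, rfl⟩ _ ⟨b, rfl⟩
      rw [← φadd, hψ, hψ, hψ]
    · rintro _ ⟨a, rfl⟩ c
      rw [← φsmul, hψ, hψ]
    · rintro γ _ ⟨a, rfl⟩ hmem
      rw [hψ]
      -- show a ∈ ℬ γ
      have hcomp : ∀ γ' : ι, γ' ≠ γ → ((DirectSum.decompose ℬ a γ' : ℬ γ') : A) = 0 := by
        intro γ' hne
        have h1 : ((DirectSum.decompose ℬ (φ a) γ' : ℬ γ') : A)
            = φ ((DirectSum.decompose ℬ a γ' : ℬ γ') : A) :=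
          degMap_zero_decompose ℬ φdeg a γ'
        have h2 : ((DirectSum.decompose ℬ (φ a) γ' : ℬ γ') : A) = 0 :=
          DirectSum.decompose_of_mem_ne ℬ hmem (fun hc => hne hc.symm)
        exact φinj0 _ (h1 ▸ h2)
      have hsum := DirectSum.sum_support_decompose ℬ a
      rw [← hsum]
      refine AddSubgroup.sum_mem _ (fun γ' _ => ?_)
      by_cases hcase : γ' = γ
      · subst hcase
        exact SetLike.coe_mem _
      · rw [hcomp γ' hcase]
        exact zero_mem _
  obtain ⟨g, hgdeg, hgext⟩ := hext
  constructor
  · refine ⟨g, hgdeg, fun a => ?_⟩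
    have : g (φ a) = ψ (φ a) := hgext (φ a) ⟨a, rfl⟩
    rw [hψ] at this
    exact this
  · exact φinj
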